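/- Suppose f: ℝ^d → ℝ^d satisfies the one-sided Lipschitz condition ⟨x - y, f(x) - f(y)⟩ ≤ K₂|x - y|² with K₂ < 0. Then for any 0 ≤ λ₁ ≤ λ₂ and all x, y ∈ ℝ^d: |x - y - λ₁(f(x) - f(y))| ≤ ((1 - K₂λ₁)/(1 - K₂λ₂)) · |x - y - λ₂(f(x) - f(y))|. -/

import Mathlib

open scoped RealInnerProductSpace

theorem stmt_2 (d : ℕ) (f : EuclideanSpace ℝ (Fin d) → EuclideanSpace ℝ (Fin d))
    (K₂ : ℝ) (hK₂ : K₂ < 0)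
    (hf : ∀ x y, ⟪x - y, f x - f y⟫ ≤ K₂ * ‖x - y‖ ^ 2)
    (l₁ l₂ : ℝ) (hl₁ : 0 ≤ l₁) (hl₁₂ : l₁ ≤ l₂) :
    ∀ x y, ‖x - y - l₁ • (f x - f y)‖ ≤
      ((1 - K₂ * l₁) / (1 - K₂ * l₂)) * ‖x - y - l₂ • (f x - f y)‖ := by
  intro x y
  set u := x - y with hu
  set v := f x - f y with hv
  have hB : ⟪u, v⟫ ≤ K₂ * ‖u‖ ^ 2 := hf x y
  have hl₂ : 0 ≤ l₂ := hl₁.trans hl₁₂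
  have hden : (0:ℝ) < 1 - K₂ * l₂ := by nlinarith
  rcases eq_or_lt_of_le hl₂ with h0 | hl₂pos
  · have h1 : l₂ = 0 := h0.symm
    have h2 : l₁ = 0 := le_antisymm (h1 ▸ hl₁₂) hl₁
    simp [h1, h2]
  · set t := (l₂ - l₁) / l₂ with ht
    have ht0 : 0 ≤ t := div_nonneg (by linarith) hl₂pos.le
    have ht1 : 1 - t = l₁ / l₂ := by rw [ht]; field_simp [hl₂pos.ne'] <;> ring
    have ht1' : 0 ≤ 1 - t := by rw [ht1]; positivity
    have key : (1 - t) * l₂ = l₁ := by rw [ht1, div_mul_cancel₀ _ hl₂pos.ne']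
    have hcomb : u - l₁ • v = t • u + (1 - t) • (u - l₂ • v) := by
      rw [← key]; module
    have h3 : ‖u - l₁ • v‖ ≤ t * ‖u‖ + (1 - t) * ‖u - l₂ • v‖ := by
      rw [hcomb]
      refine (norm_add_le _ _).trans ?_
      rw [norm_smul, norm_smul, Real.norm_of_nonneg ht0, Real.norm_of_nonneg ht1']
    have h4 : (1 - K₂ * l₂) * ‖u‖ ≤ ‖u - l₂ • v‖ := by
      rcases eq_or_ne ‖u‖ 0 with h | h
      · rw [h, mul_zero]; positivity
      · have hinner : ⟪u, u - l₂ • v⟫ ≤ ‖u‖ * ‖u - l₂ • v‖ := real_inner_le_norm _ _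
        have hlow : (1 - K₂ * l₂) * ‖u‖ ^ 2 ≤ ⟪u, u - l₂ • v⟫ := by
          rw [inner_sub_right, real_inner_smul_right, real_inner_self_eq_norm_sq]
          nlinarith
        have hn : 0 < ‖u‖ := (norm_nonneg u).lt_of_ne (Ne.symm h)
        nlinarith
    have h5 : ‖u‖ ≤ ‖u - l₂ • v‖ / (1 - K₂ * l₂) :=
      (le_div_iff₀ hden).mpr (by linarith)
    have hceq : t * (‖u - l₂ • v‖ / (1 - K₂ * l₂)) + (1 - t) * ‖u - l₂ • v‖ =
        ((1 - K₂ * l₁) / (1 - K₂ * l₂)) * ‖u - l₂ • v‖ := by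
      rw [ht]; field_simp; linear_combination (-(‖u - l₂ • v‖ * l₁)) * mul_inv_cancel₀ (show (1 - l₂ * K₂) ≠ 0 by nlinarith)
    calc ‖u - l₁ • v‖ ≤ t * ‖u‖ + (1 - t) * ‖u - l₂ • v‖ := h3
      _ ≤ t * (‖u - l₂ • v‖ / (1 - K₂ * l₂)) + (1 - t) * ‖u - l₂ • v‖ :=
          add_le_add_left (mul_le_mul_of_nonneg_left h5 ht0) _
      _ = ((1 - K₂ * l₁) / (1 - K₂ * l₂)) * ‖u - l₂ • v‖ := hceq
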